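/- Consider a word T[1..h] containing the factor u w^k v starting at position i, where |u| = |w| = |v|, w is a palindrome, u ≠ w, and v ≠ w. For any α ∈ {1, 2, ..., k}: if the palindrome centered at position i + α|u| reaches h (i.e., R(i + α|u|) ≥ h - (i + α|u|) + 1), then α = k/2 + 1. -/

import Mathlib

/-- The palindrome centered at `c` in `T[1..h]` reaches `h`, i.e. `R(c) ≥ h - c + 1`. -/
def reaches {α : Type*} (T : ℤ → α) (h c : ℤ) : Prop :=
  ∀ t : ℤ, 1 ≤ t → t ≤ h - c + 1 → T (c - t) = T (c + t - 1)

private lemma repl_getD {α : Type*} (w : List α) (d : α) :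
    ∀ (k m s : ℕ), m < k → s < w.length →
      ((List.replicate k w).flatten).getD (m * w.length + s) d = w.getD s d := by
  intro k
  induction k with
  | zero => intro m s hm _; omega
  | succ k ih =>
    intro m s hm hs
    have hstep : (List.replicate (k+1) w).flatten = w ++ (List.replicate k w).flatten := by
      rw [List.replicate_succ]; rfl
    rw [hstep]
    cases m with
    | zero =>
      rw [Nat.zero_mul, Nat.zero_add, List.getD_append _ _ _ _ hs]
    | succ m =>
      have h1 : (m + 1) * w.length + s = w.length + (m * w.length + s) := by ring
      rw [h1, List.getD_append_right _ _ _ _ (Nat.le_add_right _ _),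
        Nat.add_sub_cancel_left]
      exact ih m s (by omega) hs

/-- If `u w^k v` with `|u| = |w| = |v|`, `w` a palindrome, `u ≠ w`, `v ≠ w`, occurs at
position `i` in `T[1..h]`, and for `α ∈ {1,…,k}` the palindrome centered at `i + α|u|`
reaches `h`, then `α = k/2 + 1`. -/
theorem stmt6 {α : Type*} [Inhabited α] (T : ℤ → α) (h i : ℤ) (u w v : List α) (k : ℕ)
    (hu : u.length = w.length) (hv : v.length = w.length)
    (hw : w.reverse = w) (huw : u ≠ w) (hvw : v ≠ w)
    (hbound : i + ((k + 2) * w.length : ℕ) - 1 ≤ h)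
    (hfac : ∀ j : ℕ, j < (k + 2) * w.length →
      T (i + (j : ℤ)) = (u ++ (List.replicate k w).flatten ++ v).getD j default)
    (a : ℕ) (ha1 : 1 ≤ a) (ha2 : a ≤ k)
    (hreach : reaches T h (i + (a * w.length : ℕ))) :
    2 * a = k + 2 := by
  classical
  set n := w.length with hndef
  have hn : 0 < n := by
    rcases Nat.eq_zero_or_pos n with h0 | h0
    · exfalso
      apply huw
      rw [List.eq_nil_of_length_eq_zero (by omega : u.length = 0),
        List.eq_nil_of_length_eq_zero h0]
    · exact h0
  have hjl : (List.replicate k w).flatten.length = k * n := by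
    simp [List.length_flatten, hndef]
  have hlen2 : (u ++ (List.replicate k w).flatten).length = n + k * n := by
    rw [List.length_append, hu, hjl]
  -- getters
  have getu : ∀ s : ℕ, s < n → T (i + (s : ℤ)) = u.getD s default := by
    intro s hs
    rw [hfac s (by nlinarith)]
    rw [List.getD_append _ _ _ _ (by rw [hlen2]; omega),
      List.getD_append _ _ _ _ (by omega)]
  have getw : ∀ m s : ℕ, m < k → s < n →
      T (i + (n : ℤ) + (m : ℤ) * n + (s : ℤ)) = w.getD s default := by
    intro m s hm hs
    have hmn : m * n + s < k * n := by
      nlinarith [Nat.mul_le_mul_right n (show m + 1 ≤ k by omega)]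
    have hj : n + (m * n + s) < (k + 2) * n := by nlinarith
    have e := hfac (n + (m * n + s)) hj
    rw [show i + (n : ℤ) + (m : ℤ) * n + (s : ℤ) = i + ((n + (m * n + s) : ℕ) : ℤ) by
      push_cast; ring]
    rw [e, List.getD_append _ _ _ _ (by rw [hlen2]; omega),
      List.getD_append_right _ _ _ _ (by rw [hu]; omega)]
    rw [hu]
    rw [Nat.add_sub_cancel_left]
    exact repl_getD w default k m s hm hs
  have getv : ∀ s : ℕ, s < n →
      T (i + ((k : ℤ) + 1) * n + (s : ℤ)) = v.getD s default := by
    intro s hs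
    have hj : (n + k * n) + s < (k + 2) * n := by nlinarith
    have e := hfac ((n + k * n) + s) hj
    rw [show i + ((k : ℤ) + 1) * n + (s : ℤ) = i + (((n + k * n) + s : ℕ) : ℤ) by
      push_cast; ring]
    rw [e, List.getD_append_right _ _ _ _ (by rw [hlen2]; omega)]
    rw [hlen2, Nat.add_sub_cancel_left]
  -- palindromicity of w
  have wpal : ∀ s : ℕ, s < n → w.getD (n - 1 - s) default = w.getD s default := by
    intro s hs
    have e : w.reverse.getD s default = w.getD s default := by rw [hw]
    rw [← e, List.getD_eq_getElem _ _ (by omega : n - 1 - s < w.length),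
      List.getD_eq_getElem _ _ (by simpa using hs), List.getElem_reverse]
  -- unfold reach
  unfold reaches at hreach
  push_cast at hreach hbound
  have hnZ : (0 : ℤ) < (n : ℤ) := by exact_mod_cast hn
  have hH : ((k : ℤ) + 2 - a) * n ≤ h - (i + (a : ℤ) * n) + 1 := by linarith
  rcases lt_trichotomy (2 * a) (k + 2) with hlt | heq | hgt
  · exfalso
    apply huw
    apply List.ext_getElem (by omega)
    intro s h1 h2
    have hs : s < n := by omega
    rw [← List.getD_eq_getElem u default h1, ← List.getD_eq_getElem w default h2]
    set m : ℕ := 2 * a - 2 with hmdef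
    set s' : ℕ := n - 1 - s with hs'def
    have hmZ : (m : ℤ) = 2 * (a : ℤ) - 2 := by omega
    have hs'Z : (s' : ℤ) = (n : ℤ) - 1 - s := by omega
    have haa : (a : ℤ) * n ≤ ((k : ℤ) + 2 - a) * n := by
      apply mul_le_mul_of_nonneg_right _ (le_of_lt hnZ)
      have : 2 * (a : ℤ) ≤ (k : ℤ) + 2 := by exact_mod_cast hlt.le
      linarith
    have hna : (1 : ℤ) * n ≤ (a : ℤ) * n := by
      apply mul_le_mul_of_nonneg_right _ (le_of_lt hnZ)
      exact_mod_cast ha1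
    have hsZ : (s : ℤ) < n := by exact_mod_cast hs
    have h1t : (1 : ℤ) ≤ (a : ℤ) * n - s := by linarith
    have h2t : (a : ℤ) * n - s ≤ h - (i + (a : ℤ) * n) + 1 := by linarith
    have key := hreach ((a : ℤ) * n - s) h1t h2t
    rw [show i + (a : ℤ) * n - ((a : ℤ) * n - s) = i + (s : ℤ) by ring] at key
    rw [show i + (a : ℤ) * n + ((a : ℤ) * n - s) - 1
        = i + (n : ℤ) + (m : ℤ) * n + (s' : ℤ) by linear_combination -((n : ℤ) * hmZ) - hs'Z]
        at key
    calc u.getD s default = T (i + (s : ℤ)) := (getu s hs).symm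
      _ = T (i + (n : ℤ) + (m : ℤ) * n + (s' : ℤ)) := key
      _ = w.getD s' default := getw m s' (by omega) (by omega)
      _ = w.getD s default := wpal s hs
  · exact heq
  · exfalso
    apply hvw
    apply List.ext_getElem (by omega)
    intro s h1 h2
    have hs : s < n := by omega
    rw [← List.getD_eq_getElem v default h1, ← List.getD_eq_getElem w default h2]
    set m : ℕ := 2 * a - k - 3 with hmdef
    set s' : ℕ := n - 1 - s with hs'def
    have hmZ : (m : ℤ) = 2 * (a : ℤ) - k - 3 := by omega
    have hs'Z : (s' : ℤ) = (n : ℤ) - 1 - s := by omega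
    have hsZ : (s : ℤ) < n := by exact_mod_cast hs
    have hka : (1 : ℤ) * n ≤ ((k : ℤ) + 1 - a) * n := by
      apply mul_le_mul_of_nonneg_right _ (le_of_lt hnZ)
      have : (a : ℤ) ≤ k := by exact_mod_cast ha2
      linarith
    have h1t : (1 : ℤ) ≤ ((k : ℤ) + 1 - a) * n + s + 1 := by
      have hs0 : (0 : ℤ) ≤ (s : ℤ) := by positivity
      linarith
    have h2t : ((k : ℤ) + 1 - a) * n + (s : ℤ) + 1 ≤ h - (i + (a : ℤ) * n) + 1 := by
      linarith
    have key := hreach (((k : ℤ) + 1 - a) * n + (s : ℤ) + 1) h1t h2t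
    rw [show i + (a : ℤ) * n + (((k : ℤ) + 1 - a) * n + (s : ℤ) + 1) - 1
        = i + ((k : ℤ) + 1) * n + (s : ℤ) by ring] at key
    rw [show i + (a : ℤ) * n - (((k : ℤ) + 1 - a) * n + (s : ℤ) + 1)
        = i + (n : ℤ) + (m : ℤ) * n + (s' : ℤ) by
      linear_combination -((n : ℤ) * hmZ) - hs'Z] at key
    calc v.getD s default = T (i + ((k : ℤ) + 1) * n + (s : ℤ)) := (getv s hs).symm
      _ = T (i + (n : ℤ) + (m : ℤ) * n + (s' : ℤ)) := key.symm
      _ = w.getD s' default := getw m s' (by omega) (by omega)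
      _ = w.getD s default := wpal s hs
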